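/- Consider particles with positions $x_i(t) \in \mathbb{R}^2$ and circulations $\Gamma_i(t)$ evolving by $\dot{x}_i = \sum_j K(x_j - x_i)\Gamma_j$ and $\dot{\Gamma}_i = \nu \sum_j f_{ji}\Gamma_j$, where $K$ is the Biot--Savart kernel ($K(0)=0$, $K(z) = (z^y,-z^x)/(2\pi|z|^2)$ for $z\neq 0$) and the stencil satisfies $\sum_j f_{ij} = 0$ and $\sum_j f_{ij}(x_j - x_i) = 0$ for all $i$ at all times. Then the linear momentum $I_1(t) = \sum_i \Gamma_i(t) x_i(t)$ is conserved: $\frac{d}{dt} I_1 = 0$. -/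

import Mathlib

open Real

/-- The two-dimensional Biot--Savart kernel. -/
noncomputable def biotSavart (z : ℝ × ℝ) : ℝ × ℝ :=
  if z = 0 then 0
  else (z.2 / (2 * π * (z.1^2 + z.2^2)), -z.1 / (2 * π * (z.1^2 + z.2^2)))

lemma biotSavart_neg (z : ℝ × ℝ) : biotSavart (-z) = -biotSavart z := by
  unfold biotSavart
  by_cases h : z = 0
  · simp [h]
  · rw [if_neg h, if_neg (by simpa using h)]
    have : (-z).1^2 + (-z).2^2 = z.1^2 + z.2^2 := by simp
    rw [this]
    simp [Prod.ext_iff, neg_div]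

/-- Conservation of linear momentum `I₁ = ∑ Γ_i x_i` for the
coupled convection–diffusion ODE system, provided the (possibly time-dependent)
stencil satisfies the zeroth- and first-order moment conditions at all times. -/
theorem stmt_6 {N : ℕ} (ν : ℝ) (hν : 0 ≤ ν)
    (x : ℝ → Fin N → ℝ × ℝ) (Γ : ℝ → Fin N → ℝ) (f : ℝ → Fin N → Fin N → ℝ)
    (hx : ∀ i t, HasDerivAt (fun s => x s i)
      (∑ j, Γ t j • biotSavart (x t j - x t i)) t)
    (hΓ : ∀ i t, HasDerivAt (fun s => Γ s i) (ν * ∑ j, f t j i * Γ t j) t)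
    (hmom0 : ∀ t i, ∑ j, f t i j = 0)
    (hmom1 : ∀ t i, ∑ j, f t i j • (x t j - x t i) = (0 : ℝ × ℝ)) :
    ∀ t, HasDerivAt (fun s => ∑ i, Γ s i • x s i) (0 : ℝ × ℝ) t := by
  intro t
  have hD : HasDerivAt (fun s => ∑ i, Γ s i • x s i)
      (∑ i, (Γ t i • ∑ j, Γ t j • biotSavart (x t j - x t i) +
        (ν * ∑ j, f t j i * Γ t j) • x t i)) t := by
    apply HasDerivAt.fun_sum
    intro i _
    exact (hΓ i t).smul (hx i t)
  have hsplit : (∑ i, (Γ t i • ∑ j, Γ t j • biotSavart (x t j - x t i) +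
        (ν * ∑ j, f t j i * Γ t j) • x t i)) = 0 := by
    rw [Finset.sum_add_distrib]
    have h1 : (∑ i, (ν * ∑ j, f t j i * Γ t j) • x t i) = 0 := by
      have : ∀ i : Fin N, (ν * ∑ j, f t j i * Γ t j) • x t i
          = ∑ j, (ν * Γ t j) • (f t j i • x t i) := by
        intro i
        rw [Finset.mul_sum, Finset.sum_smul]
        congr 1; funext j
        rw [smul_smul]
        congr 1; ring
      simp_rw [this]
      rw [Finset.sum_comm]
      apply Finset.sum_eq_zero
      intro j _
      rw [← Finset.smul_sum]
      have : ∑ i, f t j i • x t i = 0 := by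
        have h := hmom1 t j
        have h0 := hmom0 t j
        calc ∑ i, f t j i • x t i
            = ∑ i, (f t j i • (x t i - x t j) + f t j i • x t j) := by
              congr 1; funext i; rw [← smul_add]; ring_nf
          _ = (∑ i, f t j i • (x t i - x t j)) + (∑ i, f t j i) • x t j := by
              rw [Finset.sum_add_distrib, Finset.sum_smul]
          _ = 0 := by rw [h, h0]; simp
      rw [this, smul_zero]
    have h2 : (∑ i, Γ t i • ∑ j, Γ t j • biotSavart (x t j - x t i)) = 0 := by
      set T := ∑ i, Γ t i • ∑ j, Γ t j • biotSavart (x t j - x t i) with hT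
      have hTT : T = -T := by
        calc T = ∑ i, ∑ j, Γ t i • Γ t j • biotSavart (x t j - x t i) := by
              rw [hT]; congr 1; funext i; rw [Finset.smul_sum]
          _ = ∑ j, ∑ i, Γ t i • Γ t j • biotSavart (x t j - x t i) := by rw [Finset.sum_comm]
          _ = ∑ i, ∑ j, Γ t j • Γ t i • biotSavart (x t i - x t j) := rfl
          _ = -T := by
              rw [hT, ← Finset.sum_neg_distrib]
              refine Finset.sum_congr rfl fun i _ => ?_
              rw [← smul_neg, ← Finset.sum_neg_distrib, Finset.smul_sum]
              refine Finset.sum_congr rfl fun j _ => ?_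
              have hz : x t i - x t j = -(x t j - x t i) := by abel
              rw [hz, biotSavart_neg, smul_comm]
              simp
      have h2T : (2:ℝ) • T = 0 := by
        rw [two_smul]; nth_rewrite 2 [hTT]; simp
      rcases smul_eq_zero.mp h2T with h | h
      · norm_num at h
      · exact h
    rw [h1, h2]; simp
  rw [← hsplit]
  exact hD
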